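/- For every p > 1 and all real a, b: F(min(a,1), min(b,1)) ≤ F(a,b) and F(max(a,-1), max(b,-1)) ≤ F(a,b). -/

import Mathlib

noncomputable def F (p a b : ℝ) : ℝ :=
  |b| ^ p - |a| ^ p - p * a * |a| ^ (p - 2) * (b - a)

private lemma tangent_nn {p : ℝ} (hp : 1 < p) {x : ℝ} (hx : 0 ≤ x) (y : ℝ) :
    x ^ p + p * x * x ^ (p - 2) * (y - x) ≤ |y| ^ p := by
  rcases eq_or_lt_of_le hx with h0 | hx'
  · rw [← h0]
    rw [Real.zero_rpow (by linarith)]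
    simp [Real.rpow_nonneg (abs_nonneg y)]
  · have hx1 : x * x ^ (p - 2) = x ^ (p - 1) := by
      rw [show p - 1 = 1 + (p - 2) by ring, Real.rpow_add hx', Real.rpow_one]
    have hxp : (0 : ℝ) < x ^ p := Real.rpow_pos_of_pos hx' p
    rcases le_or_gt 0 y with hy | hy
    · rw [abs_of_nonneg hy]
      have hs : (-1 : ℝ) ≤ y / x - 1 := by
        have : 0 ≤ y / x := div_nonneg hy hx
        linarith
      have h := one_add_mul_self_le_rpow_one_add hs hp.le
      rw [show 1 + (y / x - 1) = y / x by ring] at h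
      rw [Real.div_rpow hy hx] at h
      have h2 : x ^ p * (1 + p * (y / x - 1)) ≤ x ^ p * (y ^ p / x ^ p) :=
        mul_le_mul_of_nonneg_left h hxp.le
      rw [mul_div_cancel₀ _ hxp.ne'] at h2
      have e : x ^ p + p * x * x ^ (p - 2) * (y - x) = x ^ p * (1 + p * (y / x - 1)) := by
        rw [show x ^ p + p * x * x ^ (p - 2) * (y - x)
            = x ^ p + p * (x * x ^ (p - 2)) * (y - x) by ring, hx1,
          Real.rpow_sub hx', Real.rpow_one]
        field_simp
      linarith [e ▸ h2]
    · have hxx : x ^ (p - 1) * x = x ^ p := by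
        have h := Real.rpow_add hx' (p - 1) 1
        rw [Real.rpow_one] at h
        rw [← h, show p - 1 + 1 = p by ring]
      have hgp : 0 < p * x ^ (p - 1) := by
        positivity
      have h1 : p * x * x ^ (p - 2) * (y - x) ≤ p * x ^ (p - 1) * (-x) := by
        rw [show p * x * x ^ (p - 2) * (y - x)
            = p * (x * x ^ (p - 2)) * (y - x) by ring, hx1]
        have : y - x ≤ -x := by linarith
        nlinarith
      have h2 : p * x ^ (p - 1) * (-x) = -(p * x ^ p) := by
        rw [show p * x ^ (p-1) * (-x) = -(p * (x^(p-1)*x)) by ring, hxx]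
      have h3 : (1 - p) * x ^ p ≤ 0 := by nlinarith
      have h4 : (0:ℝ) ≤ |y| ^ p := Real.rpow_nonneg (abs_nonneg y) p
      linarith

private lemma tangent {p : ℝ} (hp : 1 < p) (x y : ℝ) :
    |x| ^ p + p * x * |x| ^ (p - 2) * (y - x) ≤ |y| ^ p := by
  rcases le_or_gt 0 x with hx | hx
  · rw [abs_of_nonneg hx]; exact tangent_nn hp hx y
  · have h := tangent_nn hp (neg_nonneg.2 hx.le) (-y)
    rw [abs_neg] at h
    rw [abs_of_neg hx]
    nlinarith [h]

private lemma F_nonneg {p : ℝ} (hp : 1 < p) (a b : ℝ) : 0 ≤ F p a b := by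
  have := tangent hp a b
  simp only [F]; linarith

private lemma g_mono {p : ℝ} (hp : 1 < p) {a c : ℝ} (hac : a ≤ c) :
    p * a * |a| ^ (p - 2) ≤ p * c * |c| ^ (p - 2) := by
  have hp0 : (0:ℝ) < p := by linarith
  have key : ∀ x : ℝ, 0 ≤ x → p * x * |x| ^ (p - 2) = p * x ^ (p - 1) := by
    intro x hx
    rcases eq_or_lt_of_le hx with h0 | hx'
    · rw [← h0]; simp [Real.zero_rpow (show p - 1 ≠ 0 by intro h; linarith)]
    · rw [abs_of_nonneg hx, show p * x * x ^ (p-2) = p * (x * x^(p-2)) by ring,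
        show p - 1 = 1 + (p - 2) by ring, Real.rpow_add hx', Real.rpow_one]
  have keyneg : ∀ x : ℝ, x < 0 → p * x * |x| ^ (p - 2) = -(p * (-x) ^ (p - 1)) := by
    intro x hx
    rw [abs_of_neg hx, show p * x * (-x)^(p-2) = -(p * ((-x) * (-x)^(p-2))) by ring,
      show p - 1 = 1 + (p - 2) by ring, Real.rpow_add (by linarith), Real.rpow_one]
  rcases le_or_gt 0 a with ha | ha
  · rw [key a ha, key c (le_trans ha hac)]
    have := Real.rpow_le_rpow ha hac (by linarith : (0:ℝ) ≤ p - 1)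
    nlinarith
  · rcases le_or_gt 0 c with hc | hc
    · rw [keyneg a ha, key c hc]
      have h1 : (0:ℝ) ≤ p * (-a) ^ (p-1) :=
        mul_nonneg (by linarith) (Real.rpow_nonneg (by linarith) _)
      have h2 : (0:ℝ) ≤ p * c ^ (p-1) := by positivity
      linarith
    · rw [keyneg a ha, keyneg c hc]
      have := Real.rpow_le_rpow (by linarith : (0:ℝ) ≤ -c) (by linarith : -c ≤ -a)
        (by linarith : (0:ℝ) ≤ p - 1)
      nlinarith

private lemma F_min {p : ℝ} (hp : 1 < p) (a b : ℝ) :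
    F p (min a 1) (min b 1) ≤ F p a b := by
  rcases le_or_gt a 1 with ha | ha <;> rcases le_or_gt b 1 with hb | hb
  · rw [min_eq_left ha, min_eq_left hb]
  · rw [min_eq_left ha, min_eq_right hb.le]
    simp only [F, abs_one, Real.one_rpow]
    have h1 := tangent hp 1 b
    simp only [abs_one, Real.one_rpow, mul_one] at h1
    have hg := g_mono hp ha
    simp only [abs_one, mul_one, Real.one_rpow] at hg
    nlinarith [mul_le_mul_of_nonneg_right hg (by linarith : (0:ℝ) ≤ b - 1)]
  · rw [min_eq_right ha.le, min_eq_left hb]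
    simp only [F, abs_one, Real.one_rpow]
    have h1 := tangent hp a 1
    simp only [abs_one, Real.one_rpow] at h1
    have hg := g_mono hp ha.le
    simp only [abs_one, mul_one, Real.one_rpow] at hg
    nlinarith [mul_nonneg (sub_nonneg.2 hg) (by linarith : (0:ℝ) ≤ 1 - b)]
  · rw [min_eq_right ha.le, min_eq_right hb.le]
    have h0 : F p 1 1 = 0 := by simp [F]
    rw [h0]; exact F_nonneg hp a b

private lemma F_neg_neg (p a b : ℝ) : F p (-a) (-b) = F p a b := by
  simp only [F, abs_neg]; ring

theorem F_contraction (p : ℝ) (hp : 1 < p) (a b : ℝ) :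
    F p (min a 1) (min b 1) ≤ F p a b ∧
    F p (max a (-1)) (max b (-1)) ≤ F p a b := by
  refine ⟨F_min hp a b, ?_⟩
  have h := F_min hp (-a) (-b)
  rw [F_neg_neg] at h
  have e1 : min (-a) 1 = -(max a (-1)) := by
    rw [← min_neg_neg]; norm_num
  have e2 : min (-b) 1 = -(max b (-1)) := by
    rw [← min_neg_neg]; norm_num
  rw [e1, e2, F_neg_neg] at h
  exact h
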